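/- Let S, T ⊆ [n-1] with ([n-1]\S) ∩ T = ∅. Then the number of permutations w of [n] satisfying ([n-1]\S) ⊆ C(w) and T ⊆ D(w) equals η([n-1]\S)/η([n-1]\T). -/

import Mathlib

open Finset

/-- The connectivity set of a word `w` of length `n+1` (0-based indices in `[n-1]` ≅ `Fin n`):
`i ∈ C(w)` iff `w j < w k` whenever `j ≤ i < k`. -/
def Cset {n : ℕ} {α : Type*} [LinearOrder α] (w : Fin (n+1) → α) : Finset (Fin n) :=
  Finset.univ.filter (fun i => ∀ j k : Fin (n+1), (j : ℕ) ≤ (i : ℕ) → (i : ℕ) < (k : ℕ) → w j < w k)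

/-- The descent set of a permutation of `[n]` (modelled on `Fin (n+1)`, 0-based). -/
def Dset {n : ℕ} (w : Equiv.Perm (Fin (n+1))) : Finset (Fin n) :=
  Finset.univ.filter (fun i => w i.succ < w i.castSucc)

/-- The list of gaps `i₁, i₂-i₁, …, n - i_k` determined by `S = {i₁ < … < i_k} ⊆ [n-1]`
(here the ambient set is `[n]` with `n+1` replaced appropriately: sets live in `Fin n`,
permutations act on `n+1` points). -/
def gaps {n : ℕ} (S : Finset (Fin n)) : List ℕ :=
  let l := (S.sort (· ≤ ·)).map (fun i => (i : ℕ) + 1)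
  List.zipWith (fun a b => b - a) (0 :: l) (l ++ [n+1])

/-- `η(S) = i₁!(i₂-i₁)!⋯(n-i_k)!`. -/
def eta {n : ℕ} (S : Finset (Fin n)) : ℕ := ((gaps S).map Nat.factorial).prod

/-- The number of inversions of a permutation. -/
def invNum {m : ℕ} (w : Equiv.Perm (Fin m)) : ℕ :=
  (Finset.univ.filter (fun p : Fin m × Fin m => p.1 < p.2 ∧ w p.2 < w p.1)).card

/-- `z(T)`: sum of binomial coefficients `C(gap, 2)` over the gaps of the complement of `T`. -/
def zstat {n : ℕ} (T : Finset (Fin n)) : ℕ := ((gaps Tᶜ).map (fun a => a.choose 2)).sum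

/-- The `q`-factorial `[j]!_q` in `ℤ[q]`. -/
noncomputable def qFact (j : ℕ) : Polynomial ℤ :=
  ∏ a ∈ Finset.range j, ∑ b ∈ Finset.range (a+1), Polynomial.X ^ b

/-- `η(S, q)`, the `q`-analogue of `η(S)`. -/
noncomputable def etaq {n : ℕ} (S : Finset (Fin n)) : Polynomial ℤ := ((gaps S).map qFact).prod

namespace Stmt4Aux

variable {n : ℕ}

/-- number of elements of `B` strictly below `x`. -/
def fib (B : Finset (Fin n)) (x : Fin (n+1)) : ℕ :=
  (B.filter (fun a : Fin n => (a:ℕ) < (x:ℕ))).card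

lemma fib_mono (B : Finset (Fin n)) : Monotone (fib B) := by
  intro x y hxy
  apply Finset.card_le_card
  intro a ha
  simp only [Finset.mem_filter] at ha ⊢
  have : (x:ℕ) ≤ (y:ℕ) := hxy
  exact ⟨ha.1, by omega⟩

lemma fib_le_card (B : Finset (Fin n)) (x : Fin (n+1)) : fib B x ≤ B.card :=
  Finset.card_le_card (Finset.filter_subset _ _)

lemma le_iff_fib_lt {B : Finset (Fin n)} {i : Fin n} (hi : i ∈ B) (x : Fin (n+1)) :
    (x:ℕ) ≤ (i:ℕ) ↔ fib B x < (B.filter (fun a : Fin n => (a:ℕ) ≤ (i:ℕ))).card := by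
  constructor
  · intro hx
    apply Finset.card_lt_card
    constructor
    · intro a ha
      simp only [Finset.mem_filter] at ha ⊢
      exact ⟨ha.1, by omega⟩
    · intro hsub
      have : i ∈ B.filter (fun a : Fin n => (a:ℕ) < (x:ℕ)) := hsub (by simp [hi])
      simp only [Finset.mem_filter] at this
      omega
  · intro hlt
    by_contra hx
    push_neg at hx
    have hsub : B.filter (fun a : Fin n => (a:ℕ) ≤ (i:ℕ))
        ⊆ B.filter (fun a : Fin n => (a:ℕ) < (x:ℕ)) := by
      intro a ha
      simp only [Finset.mem_filter] at ha ⊢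
      exact ⟨ha.1, by omega⟩
    exact absurd (Finset.card_le_card hsub) (by unfold fib at hlt; omega)

lemma csubset_iff_prefix (A : Finset (Fin n)) (w : Equiv.Perm (Fin (n+1))) :
    A ⊆ Cset ⇑w ↔ ∀ i ∈ A, ∀ x : Fin (n+1), ((w x : ℕ) ≤ (i:ℕ) ↔ (x:ℕ) ≤ (i:ℕ)) := by
  constructor
  · intro hA i hi x
    have hC := hA hi
    simp only [Cset, Finset.mem_filter, Finset.mem_univ, true_and] at hC
    set E := Finset.univ.filter (fun x : Fin (n+1) => (x:ℕ) ≤ (i:ℕ)) with hE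
    set F := Finset.univ.filter (fun x : Fin (n+1) => ((w x : ℕ)) ≤ (i:ℕ)) with hF
    have hcard : F.card = E.card := by
      apply Finset.card_bij (fun x _ => w x)
      · intro a ha; simp only [hE, hF, Finset.mem_filter, Finset.mem_univ, true_and] at ha ⊢
        exact ha
      · intro a _ b _ hab; exact w.injective hab
      · intro b hb
        refine ⟨w.symm b, ?_, by simp⟩
        simp only [hE, hF, Finset.mem_filter, Finset.mem_univ, true_and] at hb ⊢
        simpa using hb
    -- show E = F
    have hEF : E = F := by
      by_contra hne
      have h1 : ¬ (E ⊆ F) ∨ ¬ (F ⊆ E) := by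
        by_contra hc; push_neg at hc
        exact hne (Finset.Subset.antisymm hc.1 hc.2)
      -- in either case find x0 ∈ E \ F and k0 ∈ F \ E
      have key : ∀ x0 ∈ E, x0 ∉ F → False := by
        intro x0 hx0E hx0F
        -- then F \ E nonempty
        have h2 : (F \ E).Nonempty := by
          rw [← Finset.card_pos]
          have h3 : (E \ F).Nonempty := ⟨x0, Finset.mem_sdiff.mpr ⟨hx0E, hx0F⟩⟩
          have := Finset.card_sdiff_add_card_inter F E
          have := Finset.card_sdiff_add_card_inter E F
          rw [Finset.inter_comm] at this
          have h4 := Finset.card_pos.mpr h3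
          omega
        obtain ⟨k0, hk0⟩ := h2
        rw [Finset.mem_sdiff] at hk0
        simp only [hE, hF, Finset.mem_filter, Finset.mem_univ, true_and, not_le] at hx0E hx0F hk0
        have := hC x0 k0 hx0E hk0.2
        rw [Fin.lt_def] at this
        omega
      rcases h1 with h1 | h1
      · rw [Finset.not_subset] at h1
        obtain ⟨x0, hx0E, hx0F⟩ := h1
        exact key x0 hx0E hx0F
      · rw [Finset.not_subset] at h1
        obtain ⟨k0, hk0F, hk0E⟩ := h1
        -- symmetric: k0 ∈ F \ E; find element of E \ F
        have h2 : (E \ F).Nonempty := by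
          rw [← Finset.card_pos]
          have h3 : (F \ E).Nonempty := ⟨k0, Finset.mem_sdiff.mpr ⟨hk0F, hk0E⟩⟩
          have := Finset.card_sdiff_add_card_inter F E
          have := Finset.card_sdiff_add_card_inter E F
          rw [Finset.inter_comm] at this
          have h4 := Finset.card_pos.mpr h3
          omega
        obtain ⟨x0, hx0⟩ := h2
        rw [Finset.mem_sdiff] at hx0
        exact key x0 hx0.1 hx0.2
    have : x ∈ E ↔ x ∈ F := by rw [hEF]
    simp only [hE, hF, Finset.mem_filter, Finset.mem_univ, true_and] at this
    exact this.symm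
  · intro hp i hi
    simp only [Cset, Finset.mem_filter, Finset.mem_univ, true_and]
    intro j k hj hk
    have h1 : (w j : ℕ) ≤ (i:ℕ) := (hp i hi j).mpr hj
    have h2 : ¬ ((w k : ℕ) ≤ (i:ℕ)) := fun hc => absurd ((hp i hi k).mp hc) (by omega)
    exact Fin.lt_def.mpr (by omega)

lemma csubset_iff_fib (A : Finset (Fin n)) (w : Equiv.Perm (Fin (n+1))) :
    A ⊆ Cset ⇑w ↔ ∀ x, fib A (w x) = fib A x := by
  rw [csubset_iff_prefix]
  constructor
  · intro hp x
    unfold fib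
    congr 1
    apply Finset.filter_congr
    intro a ha
    have := hp a ha x
    constructor <;> (intro; omega)
  · intro hf i hi x
    rw [le_iff_fib_lt hi, le_iff_fib_lt hi, hf]


-- countP/get characterization for sorted lists of Fin n
lemma cp1 {s : List (Fin n)} (hs : s.Pairwise (· ≤ ·)) (x : ℕ) :
    ∀ j (h : j < s.length),
      ((s[j] : ℕ) < x ↔ j < s.countP (fun a : Fin n => decide ((a:ℕ) < x))) := by
  induction s with
  | nil => intro j h; simp at h
  | cons a rest ih =>
    rw [List.pairwise_cons] at hs
    intro j h
    rcases Nat.eq_zero_or_pos j with rfl | hj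
    · simp only [List.getElem_cons_zero, List.countP_cons]
      by_cases hax : (a:ℕ) < x
      · simp [hax]
      · have hz : rest.countP (fun b : Fin n => decide ((b:ℕ) < x)) = 0 := by
          rw [List.countP_eq_zero]
          intro b hb
          have := hs.1 b hb
          simp only [decide_eq_true_eq]
          have : (a:ℕ) ≤ (b:ℕ) := this
          omega
        simp [hax, hz]
    · obtain ⟨j, rfl⟩ := Nat.exists_eq_succ_of_ne_zero hj.ne'
      have hjl : j < rest.length := by simpa using Nat.succ_lt_succ_iff.mp h
      simp only [List.getElem_cons_succ]
      by_cases hax : (a:ℕ) < x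
      · rw [List.countP_cons_of_pos (by simpa using hax)]
        have hih := ih hs.2 j hjl
        rw [Nat.succ_lt_succ_iff]
        exact hih
      · rw [List.countP_cons_of_neg (by simpa using hax)]
        have hz : rest.countP (fun b : Fin n => decide ((b:ℕ) < x)) = 0 := by
          rw [List.countP_eq_zero]
          intro b hb
          have h1 : (a:ℕ) ≤ (b:ℕ) := hs.1 b hb
          simp only [decide_eq_true_eq]
          omega
        have h1 : (a:ℕ) ≤ (rest[j] : ℕ) := hs.1 _ (rest.getElem_mem hjl)
        rw [hz]
        constructor
        · intro hc; omega
        · intro hc; omega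



def cuts (A : Finset (Fin n)) : List ℕ :=
  0 :: (A.sort (· ≤ ·)).map (fun i : Fin n => (i : ℕ) + 1)

def cf (A : Finset (Fin n)) (t : ℕ) : ℕ := (cuts A).getD t (n+1)

lemma length_cuts (A : Finset (Fin n)) : (cuts A).length = A.card + 1 := by
  simp [cuts, Finset.length_sort]

lemma cf_le (A : Finset (Fin n)) (t : ℕ) : cf A t ≤ n + 1 := by
  unfold cf
  rcases lt_or_ge t (cuts A).length with ht | ht
  · rw [List.getD_eq_getElem _ _ ht]
    unfold cuts at ht ⊢
    match t, ht with
    | 0, _ => simp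
    | (j+1), ht =>
      simp only [List.getElem_cons_succ]
      rw [List.getElem_map]
      have := ((A.sort (· ≤ ·))[j]'(by simpa using ht)).isLt
      omega
  · rw [List.getD_eq_default _ _ ht]

lemma fib_eq_countP (A : Finset (Fin n)) (x : Fin (n+1)) :
    fib A x = (A.sort (· ≤ ·)).countP (fun a : Fin n => decide ((a:ℕ) < (x:ℕ))) := by
  rw [(Finset.sort_perm_toList (s := A) (r := (· ≤ ·))).countP_eq]
  unfold fib
  rw [Finset.card_def, Finset.filter_val, ← Multiset.countP_eq_card_filter,
    ← Finset.coe_toList A, Multiset.coe_countP]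

lemma fib_eq_iff (A : Finset (Fin n)) (x : Fin (n+1)) (t : ℕ) (ht : t ≤ A.card) :
    fib A x = t ↔ cf A t ≤ (x:ℕ) ∧ (x:ℕ) < cf A (t+1) := by
  have hslen : (A.sort (· ≤ ·)).length = A.card := Finset.length_sort _
  have hsorted := Finset.pairwise_sort (s := A) (r := (· ≤ ·))
  have hcp := cp1 hsorted (x:ℕ)
  rw [fib_eq_countP]
  set m := (A.sort (· ≤ ·)).countP (fun a : Fin n => decide ((a:ℕ) < (x:ℕ))) with hm
  have hmlen : m ≤ A.card := by rw [hm, ← hslen]; exact List.countP_le_length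
  have h1 : cf A t ≤ (x:ℕ) ↔ t ≤ m := by
    match t, ht with
    | 0, _ => simp [cf, cuts]
    | (j+1), ht =>
      have hjlt : j < (A.sort (· ≤ ·)).length := by omega
      have : cf A (j+1) = ((A.sort (· ≤ ·))[j] : ℕ) + 1 := by
        unfold cf cuts
        rw [List.getD_eq_getElem _ _ (by simp [Finset.length_sort]; omega)]
        simp only [List.getElem_cons_succ]
        rw [List.getElem_map]
      rw [this]
      rw [Nat.add_one_le_iff, Nat.add_one_le_iff]
      exact (hcp j hjlt)
  have h2 : (x:ℕ) < cf A (t+1) ↔ m ≤ t := by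
    rcases eq_or_lt_of_le ht with rfl | htlt
    · have : cf A (A.card + 1) = n + 1 := by
        unfold cf
        rw [List.getD_eq_default _ _ (by rw [length_cuts])]
      rw [this]
      simp only [hmlen, iff_true]
      exact x.isLt
    · have htl : t < (A.sort (· ≤ ·)).length := by omega
      have : cf A (t+1) = ((A.sort (· ≤ ·))[t] : ℕ) + 1 := by
        unfold cf cuts
        rw [List.getD_eq_getElem _ _ (by simp [Finset.length_sort]; omega)]
        simp only [List.getElem_cons_succ]
        rw [List.getElem_map]
      rw [this]
      have := hcp t htl
      omega
  rw [h1, h2]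
  omega

lemma cuts_getElem_succ (A : Finset (Fin n)) (j : ℕ)
    (hj : j < (A.sort (· ≤ ·)).length) :
    cf A (j+1) = (((A.sort (· ≤ ·)).map (fun i : Fin n => (i : ℕ) + 1))[j]'(by
      simpa using hj)) := by
  unfold cf cuts
  rw [List.getD_eq_getElem _ _ (by simp [Finset.length_sort] at hj ⊢; omega)]
  simp only [List.getElem_cons_succ]

lemma gaps_eq (A : Finset (Fin n)) :
    gaps A = List.ofFn (fun t : Fin (A.card + 1) => cf A ((t:ℕ)+1) - cf A (t:ℕ)) := by
  set l := (A.sort (· ≤ ·)).map (fun i : Fin n => (i : ℕ) + 1) with hl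
  have hllen : l.length = A.card := by simp [hl, Finset.length_sort]
  have hcuts : cuts A = 0 :: l := rfl
  have hg : gaps A = List.zipWith (fun a b => b - a) (0 :: l) (l ++ [n+1]) := by
    unfold gaps
    simp only [List.pure_def, List.bind_eq_flatMap, ← List.map_eq_flatMap, List.map_map]
    rfl
  rw [hg]
  apply List.ext_getElem
  · simp [List.length_zipWith, hllen]
  · intro t h1 h2
    have ht : t < A.card + 1 := by
      simpa [List.length_zipWith, hllen] using h1
    rw [List.getElem_zipWith, List.getElem_ofFn]
    have hcl : (0 :: l)[t]'(by simp [hllen]; omega) = cf A t := by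
      unfold cf
      rw [hcuts, List.getD_eq_getElem _ _ (by simp [hllen]; omega)]
    have hcr : (l ++ [n+1])[t]'(by simp [hllen]; omega) = cf A (t+1) := by
      rcases lt_or_eq_of_le (Nat.lt_succ_iff.mp ht) with htlt | hteq
      · rw [List.getElem_append_left (by omega)]
        rw [cuts_getElem_succ A t (by rw [Finset.length_sort]; omega)]
      · have heq : t = l.length := by omega
        subst heq
        rw [List.getElem_append_right (by omega)]
        simp only [Nat.sub_self, List.getElem_singleton]
        unfold cf
        rw [List.getD_eq_default _ _ (by rw [length_cuts]; omega)]
    rw [hcl, hcr]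


lemma card_csubset (A : Finset (Fin n)) :
    Fintype.card {w : Equiv.Perm (Fin (n+1)) // A ⊆ Cset ⇑w} = eta A := by
  classical
  set fibf : Fin (n+1) → Fin (A.card+1) :=
    fun x => ⟨fib A x, Nat.lt_succ_of_le (fib_le_card A x)⟩ with hfibf
  have step1 : Fintype.card {w : Equiv.Perm (Fin (n+1)) // A ⊆ Cset ⇑w}
      = Fintype.card {w : Equiv.Perm (Fin (n+1)) // fibf ∘ ⇑w = fibf} := by
    apply Fintype.card_congr
    apply Equiv.subtypeEquivRight
    intro w
    rw [csubset_iff_fib]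
    constructor
    · intro hw
      funext x
      exact Fin.ext (hw x)
    · intro hw x
      exact congrArg Fin.val (congrFun hw x)
  have step3 : ∀ t : Fin (A.card+1),
      Fintype.card {x : Fin (n+1) // fibf x = t} = cf A ((t:ℕ)+1) - cf A (t:ℕ) := by
    intro t
    rw [Fintype.card_subtype]
    have hfilt : (Finset.univ.filter (fun x : Fin (n+1) => fibf x = t))
        = Finset.univ.filter
            (fun x : Fin (n+1) => cf A (t:ℕ) ≤ (x:ℕ) ∧ (x:ℕ) < cf A ((t:ℕ)+1)) := by
      apply Finset.filter_congr
      intro x _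
      rw [hfibf, Fin.ext_iff]
      exact fib_eq_iff A x (t:ℕ) (Nat.lt_succ_iff.mp t.isLt)
    rw [hfilt, ← Nat.card_Ico (cf A (t:ℕ)) (cf A ((t:ℕ)+1))]
    apply Finset.card_bij (fun (x : Fin (n+1)) _ => (x:ℕ))
    · intro x hx
      simp only [Finset.mem_filter, Finset.mem_univ, true_and] at hx
      exact Finset.mem_Ico.mpr hx
    · intro x _ y _ hxy
      exact Fin.ext hxy
    · intro m hm
      rw [Finset.mem_Ico] at hm
      have hmn : m < n + 1 := lt_of_lt_of_le hm.2 (cf_le A _)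
      exact ⟨⟨m, hmn⟩, by simp only [Finset.mem_filter, Finset.mem_univ, true_and]; exact hm, rfl⟩
  have step4 : eta A = ∏ t : Fin (A.card+1), Nat.factorial (cf A ((t:ℕ)+1) - cf A (t:ℕ)) := by
    unfold eta
    rw [gaps_eq, List.map_ofFn]
    exact Fin.prod_ofFn _
  rw [step1, DomMulAct.stabilizer_card fibf, step4]
  exact Finset.prod_congr rfl (fun t _ => by rw [step3 t])

lemma fib_compl_castSucc_succ {T : Finset (Fin n)} {i : Fin n} (hi : i ∈ T) :
    fib Tᶜ i.castSucc = fib Tᶜ i.succ := by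
  unfold fib
  congr 1
  apply Finset.filter_congr
  intro a ha
  have hne : a ≠ i := fun hc => (Finset.mem_compl.mp ha) (hc ▸ hi)
  have hne' : (a:ℕ) ≠ (i:ℕ) := fun hc => hne (Fin.ext hc)
  simp only [Fin.coe_castSucc, Fin.val_succ]
  constructor <;> (intro; omega)

lemma dsubset_iff (T : Finset (Fin n)) (w : Equiv.Perm (Fin (n+1))) :
    T ⊆ Dset w ↔
      ∀ x y : Fin (n+1), fib Tᶜ x = fib Tᶜ y → x < y → w y < w x := by
  constructor
  · intro hT
    have adj : ∀ x y : Fin (n+1), (y:ℕ) = (x:ℕ) + 1 → fib Tᶜ x = fib Tᶜ y → w y < w x := by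
      intro x y hxy hf
      have hxn : (x:ℕ) < n := by have := y.isLt; omega
      set i : Fin n := ⟨(x:ℕ), hxn⟩ with hi
      have hiT : i ∈ T := by
        by_contra hiT
        have hiB : i ∈ Tᶜ := Finset.mem_compl.mpr hiT
        have hsub : Tᶜ.filter (fun a : Fin n => (a:ℕ) < (x:ℕ))
            ⊂ Tᶜ.filter (fun a : Fin n => (a:ℕ) < (y:ℕ)) := by
          constructor
          · intro a ha
            simp only [Finset.mem_filter] at ha ⊢
            exact ⟨ha.1, by omega⟩
          · intro hsub'
            have : i ∈ Tᶜ.filter (fun a : Fin n => (a:ℕ) < (x:ℕ)) :=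
              hsub' (by simp only [Finset.mem_filter]; exact ⟨hiB, by simp [hi]; omega⟩)
            simp only [Finset.mem_filter, hi] at this
            omega
        have := Finset.card_lt_card hsub
        unfold fib at hf
        omega
      have hd := hT hiT
      simp only [Dset, Finset.mem_filter, Finset.mem_univ, true_and] at hd
      have h1 : i.castSucc = x := Fin.ext (by simp [hi])
      have h2 : i.succ = y := Fin.ext (by simp [hi]; omega)
      rwa [h1, h2] at hd
    have main : ∀ d : ℕ, ∀ x y : Fin (n+1), (y:ℕ) = (x:ℕ) + d + 1 →
        fib Tᶜ x = fib Tᶜ y → w y < w x := by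
      intro d
      induction d with
      | zero => intro x y h1 h2; exact adj x y (by omega) h2
      | succ d ih =>
        intro x y hxy hf
        have hz : (x:ℕ) + 1 < n + 1 := by have := y.isLt; omega
        set z : Fin (n+1) := ⟨(x:ℕ)+1, hz⟩ with hzdef
        have hxz : x ≤ z := by rw [Fin.le_def]; simp [hzdef]
        have hzy : z ≤ y := by rw [Fin.le_def]; simp [hzdef]; omega
        have h1 := fib_mono Tᶜ hxz
        have h2 := fib_mono Tᶜ hzy
        have hfz : fib Tᶜ x = fib Tᶜ z := by omega
        have hfy : fib Tᶜ z = fib Tᶜ y := by omega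
        exact lt_trans (ih z y (by simp [hzdef]; omega) hfy) (adj x z (by simp [hzdef]) hfz)
    intro x y hf hxy
    have hlt : (x:ℕ) < (y:ℕ) := hxy
    exact main ((y:ℕ) - (x:ℕ) - 1) x y (by omega) hf
  · intro ha i hi
    simp only [Dset, Finset.mem_filter, Finset.mem_univ, true_and]
    apply ha i.castSucc i.succ (fib_compl_castSucc_succ hi)
    rw [Fin.lt_def]
    simp

/-- The lexicographic key used to sort a permutation within blocks. -/
def key (B : Finset (Fin n)) (w : Equiv.Perm (Fin (n+1))) (x : Fin (n+1)) :
    ℕ ×ₗ (Fin (n+1))ᵒᵈ :=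
  toLex (fib B x, OrderDual.toDual (w x))

lemma key_injective (B : Finset (Fin n)) (w : Equiv.Perm (Fin (n+1))) :
    Function.Injective (key B w) := by
  intro x y hxy
  unfold key at hxy
  have h2 := congrArg (fun p => (ofLex p).2) hxy
  simp only [ofLex_toLex] at h2
  exact w.injective (OrderDual.toDual.injective h2)

lemma monotone_key_comp {B : Finset (Fin n)} {w₀ u : Equiv.Perm (Fin (n+1))}
    (hu : ∀ x, fib B (u x) = fib B x)
    (hw₀ : ∀ x y : Fin (n+1), fib B x = fib B y → x < y → w₀ y < w₀ x) :
    Monotone (key B (w₀ * u) ∘ ⇑u⁻¹) := by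
  have huinv : ∀ x, fib B (u⁻¹ x) = fib B x := by
    intro x
    have := hu (u⁻¹ x)
    simpa using this.symm
  have hkey : ∀ x, (key B (w₀ * u) ∘ ⇑u⁻¹) x = toLex (fib B x, OrderDual.toDual (w₀ x)) := by
    intro x
    simp only [Function.comp_apply, key, Equiv.Perm.mul_apply, Equiv.apply_symm_apply]
    rw [huinv]
    congr 2
    show w₀ (u (u⁻¹ x)) = w₀ x
    simp
  intro x y hxy
  rw [hkey, hkey, Prod.Lex.le_iff]
  rcases eq_or_lt_of_le hxy with rfl | hlt
  · right; exact ⟨rfl, le_refl _⟩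
  · have hmono := fib_mono B hxy
    rcases eq_or_lt_of_le hmono with hfeq | hflt
    · right
      refine ⟨hfeq, ?_⟩
      have := hw₀ x y hfeq hlt
      exact OrderDual.toDual_le_toDual.mpr (le_of_lt this)
    · left; exact hflt

lemma card_mul_card (A T : Finset (Fin n)) (hAT : A ⊆ Tᶜ) :
    Fintype.card {w : Equiv.Perm (Fin (n+1)) // A ⊆ Cset ⇑w ∧ T ⊆ Dset w}
      * Fintype.card {u : Equiv.Perm (Fin (n+1)) // Tᶜ ⊆ Cset ⇑u}
    = Fintype.card {w : Equiv.Perm (Fin (n+1)) // A ⊆ Cset ⇑w} := by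
  classical
  set B := Tᶜ with hB
  set F : {w : Equiv.Perm (Fin (n+1)) // A ⊆ Cset ⇑w ∧ T ⊆ Dset w}
      × {u : Equiv.Perm (Fin (n+1)) // B ⊆ Cset ⇑u}
      → {w : Equiv.Perm (Fin (n+1)) // A ⊆ Cset ⇑w} :=
    fun p => ⟨p.1.1 * p.2.1, by
      rw [csubset_iff_prefix]
      intro i hi x
      have h1 := (csubset_iff_prefix A p.1.1).mp p.1.2.1 i hi (p.2.1 x)
      have h2 := (csubset_iff_prefix B p.2.1).mp p.2.2 i (hAT hi) x
      rw [Equiv.Perm.mul_apply]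
      rw [h1, h2]⟩ with hF
  have hbij : Function.Bijective F := by
    constructor
    · rintro ⟨⟨w₀, hw₀C, hw₀D⟩, ⟨u, huC⟩⟩ ⟨⟨w₀', hw₀C', hw₀D'⟩, ⟨u', huC'⟩⟩ heq
      have heqw : w₀ * u = w₀' * u' := congrArg Subtype.val heq
      have hu : ∀ x, fib B (u x) = fib B x := (csubset_iff_fib B u).mp huC
      have hu' : ∀ x, fib B (u' x) = fib B x := (csubset_iff_fib B u').mp huC'
      have hanti := (dsubset_iff T w₀).mp hw₀D
      have hanti' := (dsubset_iff T w₀').mp hw₀D'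
      have hm1 : Monotone (key B (w₀ * u) ∘ ⇑u⁻¹) := monotone_key_comp hu hanti
      have hm2 : Monotone (key B (w₀ * u) ∘ ⇑u'⁻¹) := by
        rw [heqw]
        exact monotone_key_comp hu' hanti'
      have hueq : ⇑u⁻¹ = ⇑u'⁻¹ := by
        have := Tuple.unique_monotone (f := key B (w₀ * u)) (σ := u⁻¹) (τ := u'⁻¹) hm1 hm2
        funext x
        exact key_injective B (w₀ * u) (congrFun this x)
      have huu : u = u' := by
        have : u⁻¹ = u'⁻¹ := Equiv.ext (fun x => congrFun hueq x)
        exact inv_injective this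
      subst huu
      have hww : w₀ = w₀' := mul_right_cancel heqw
      subst hww
      rfl
    · rintro ⟨w, hw⟩
      set σ := Tuple.sort (key B w) with hσ
      have hmono : Monotone (key B w ∘ ⇑σ) := Tuple.monotone_sort (key B w)
      -- first components are monotone
      have hgmono : Monotone (fun x => fib B (σ x)) := by
        intro x y hxy
        have h0 := hmono hxy
        have h1 : toLex (fib B (σ x), OrderDual.toDual (w (σ x)))
            ≤ toLex (fib B (σ y), OrderDual.toDual (w (σ y))) := h0
        rw [Prod.Lex.le_iff] at h1
        simp only [ofLex_toLex] at h1
        rcases h1 with h | h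
        · exact le_of_lt h
        · exact le_of_eq h.1
      -- σ preserves fib B
      have hgs : ∀ x, fib B (σ x) = fib B x := by
        have hcard : ∀ a : ℕ, (Finset.univ.filter (fun i : Fin (n+1) => fib B (σ i) ≤ a)).card
            = (Finset.univ.filter (fun i : Fin (n+1) => fib B i ≤ a)).card := by
          intro a
          rw [← Fintype.card_subtype, ← Fintype.card_subtype]
          exact Fintype.card_congr (Equiv.subtypeEquiv σ (fun x => Iff.rfl))
        intro x
        have h1 := fun a => Tuple.lt_card_le_iff_apply_le_of_monotone
          (f := fun i => fib B (σ i)) (a := a) (j := x) hgmono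
        have h2 := fun a => Tuple.lt_card_le_iff_apply_le_of_monotone
          (f := fib B) (a := a) (j := x) (fib_mono B)
        have ha1 : fib B (σ x) ≤ fib B x := by
          have := (h2 (fib B x)).mpr (le_refl _)
          rw [← hcard] at this
          exact (h1 (fib B x)).mp this
        have ha2 : fib B x ≤ fib B (σ x) := by
          have := (h1 (fib B (σ x))).mpr (le_refl _)
          rw [hcard] at this
          exact (h2 (fib B (σ x))).mp this
        omega
      have hginv : ∀ x, fib B (σ⁻¹ x) = fib B x := by
        intro x
        have := hgs (σ⁻¹ x)
        simpa using this.symm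
      refine ⟨⟨⟨w * σ, ?_, ?_⟩, ⟨σ⁻¹, ?_⟩⟩, ?_⟩
      · -- A ⊆ Cset (w * σ)
        rw [csubset_iff_prefix]
        intro i hi x
        have h1 := (csubset_iff_prefix A w).mp hw i hi (σ x)
        have h2 := (csubset_iff_fib B σ).mpr hgs
        have h3 := (csubset_iff_prefix B σ).mp h2 i (hAT hi) x
        rw [Equiv.Perm.mul_apply, h1, h3]
      · -- T ⊆ Dset (w * σ)
        rw [dsubset_iff]
        intro x y hf hxy
        have hle0 := hmono (le_of_lt hxy)
        have hle : toLex (fib B (σ x), OrderDual.toDual (w (σ x)))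
            ≤ toLex (fib B (σ y), OrderDual.toDual (w (σ y))) := hle0
        rw [Prod.Lex.le_iff] at hle
        simp only [ofLex_toLex] at hle
        rcases hle with h | h
        · rw [hgs, hgs, hf] at h
          exact absurd h (lt_irrefl _)
        · have h2 : w (σ y) ≤ w (σ x) := OrderDual.toDual_le_toDual.mp h.2
          have hne : w (σ y) ≠ w (σ x) := by
            intro hc
            have := σ.injective (w.injective hc)
            exact absurd this (ne_of_gt hxy)
          rw [Equiv.Perm.mul_apply, Equiv.Perm.mul_apply]
          exact lt_of_le_of_ne h2 hne
      · -- B ⊆ Cset σ⁻¹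
        exact (csubset_iff_fib B σ⁻¹).mpr hginv
      · apply Subtype.ext
        show (w * σ) * σ⁻¹ = w
        group
  rw [← Fintype.card_prod]
  exact Fintype.card_congr (Equiv.ofBijective F hbij)

end Stmt4Aux

/-- If `([n-1]\S) ∩ T = ∅` then the number of permutations with `[n-1]\S ⊆ C(w)` and
`T ⊆ D(w)` equals `η([n-1]\S)/η([n-1]\T)`, stated as a product identity. -/
theorem stmt4 (n : ℕ) (S T : Finset (Fin n)) (h : Sᶜ ∩ T = ∅) :
    (Finset.univ.filter
        (fun w : Equiv.Perm (Fin (n+1)) => Sᶜ ⊆ Cset ⇑w ∧ T ⊆ Dset w)).card * eta Tᶜ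
      = eta Sᶜ := by
  classical
  have hAT : Sᶜ ⊆ Tᶜ := by
    intro i hi
    rw [Finset.mem_compl]
    intro hiT
    have hmem : i ∈ Sᶜ ∩ T := Finset.mem_inter.mpr ⟨hi, hiT⟩
    rw [h] at hmem
    exact absurd hmem (Finset.notMem_empty i)
  have h1 := Stmt4Aux.card_mul_card Sᶜ T hAT
  have h2 := Stmt4Aux.card_csubset (n := n) Tᶜ
  have h3 := Stmt4Aux.card_csubset (n := n) Sᶜ
  rw [← h3, ← h1, ← h2]
  congr 1
  rw [Fintype.card_subtype]
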